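/- Let A, B, C ∈ M₂(ℝ), S(x) = Ax + B, let T : ℝ → M₂(ℝ) be a matrix polynomial function and F ∈ M₂(ℝ). Define the right-acting operators 𝔘 : Ψ ↦ Ψ'S + ΨC and 𝔙 : Φ ↦ Φ'T + ΦF. Fix n ≥ 0, suppose An + C is invertible, and let Ψ be a monic 2×2 matrix polynomial of degree n such that (Ψ·𝔘)·𝔙 = Λ̃Ψ for some constant matrix Λ̃ ∈ M₂(ℝ). Then P := (An+C)⁻¹·(Ψ·𝔘) is a monic matrix polynomial of degree n and satisfies (P·𝔙)·𝔘 = Λ(n)P, where Λ(n) = (An+C)⁻¹Λ̃(An+C). -/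
import Mathlib


open Matrix

noncomputable section

abbrev Mat2 := Matrix (Fin 2) (Fin 2) ℝ

/-- A 2×2 real matrix-valued polynomial function: every entry is a polynomial. -/
def IsMatPoly (P : ℝ → Mat2) : Prop :=
  ∀ i j, ∃ p : Polynomial ℝ, ∀ x, P x i j = p.eval x

/-- `P` is a monic 2×2 matrix polynomial of degree `n`. -/
def IsMonicMatPoly (P : ℝ → Mat2) (n : ℕ) : Prop :=
  ∃ A : ℕ → Mat2, A n = 1 ∧ ∀ x, P x = ∑ i ∈ Finset.range (n + 1), x ^ i • A i

/-- Entrywise derivative of a matrix-valued function. -/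
def mDeriv (P : ℝ → Mat2) : ℝ → Mat2 :=
  fun x => Matrix.of fun i j => deriv (fun t => P t i j) x

lemma entry_sum_eq (M : ℕ → Mat2) (m : ℕ) (i j : Fin 2) :
    (fun t => (∑ k ∈ Finset.range m, t ^ k • M k) i j)
      = fun t => ∑ k ∈ Finset.range m, t ^ k * M k i j := by
  funext t
  simp [Matrix.sum_apply, Matrix.smul_apply, smul_eq_mul]

lemma polyEntryDiff (M : ℕ → Mat2) (m : ℕ) (i j : Fin 2) (x : ℝ) :
    DifferentiableAt ℝ (fun t => (∑ k ∈ Finset.range m, t ^ k • M k) i j) x := by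
  rw [entry_sum_eq]
  exact DifferentiableAt.fun_sum fun k _ => (differentiableAt_pow k).mul_const _

lemma mDeriv_sum (M : ℕ → Mat2) (m : ℕ) (x : ℝ) :
    mDeriv (fun t => ∑ k ∈ Finset.range m, t ^ k • M k) x
      = ∑ k ∈ Finset.range m, ((k : ℝ) * x ^ (k - 1)) • M k := by
  ext i j
  simp only [mDeriv, of_apply]
  rw [entry_sum_eq, deriv_fun_sum (fun k _ => (differentiableAt_pow k).mul_const _)]
  simp [Matrix.sum_apply, Matrix.smul_apply, smul_eq_mul, deriv_mul_const]

lemma mDeriv_const_mul (M : Mat2) (Q : ℝ → Mat2) (x : ℝ)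
    (h : ∀ i j, DifferentiableAt ℝ (fun t => Q t i j) x) :
    mDeriv (fun t => M * Q t) x = M * mDeriv Q x := by
  ext i j
  simp only [mDeriv, of_apply, Matrix.mul_apply]
  rw [deriv_fun_sum (fun k _ => (h k j).const_mul (M i k))]
  exact Finset.sum_congr rfl fun k _ => deriv_const_mul _ (h k j)

/-- Darboux transformation of eigenfunctions: if (Ψ·𝔘)·𝔙 = Λ̃Ψ, then
P = (An+C)⁻¹(Ψ·𝔘) is monic of degree n and (P·𝔙)·𝔘 = (An+C)⁻¹Λ̃(An+C)·P. -/
theorem darboux_eigenfunction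
    (A B C F : Mat2) (T : ℝ → Mat2) (hT : IsMatPoly T)
    (S : ℝ → Mat2) (hS : ∀ x, S x = x • A + B)
    (opU : (ℝ → Mat2) → (ℝ → Mat2))
    (hopU : ∀ P x, opU P x = mDeriv P x * S x + P x * C)
    (opV : (ℝ → Mat2) → (ℝ → Mat2))
    (hopV : ∀ P x, opV P x = mDeriv P x * T x + P x * F)
    (n : ℕ) (hinv : IsUnit ((n : ℝ) • A + C))
    (Ψ : ℝ → Mat2) (hΨ : IsMonicMatPoly Ψ n)
    (Λt : Mat2)
    (heig : ∀ x, opV (opU Ψ) x = Λt * Ψ x) :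
    let P : ℝ → Mat2 := fun x => ((n : ℝ) • A + C)⁻¹ * opU Ψ x
    IsMonicMatPoly P n ∧
      ∀ x, opU (opV P) x =
        (((n : ℝ) • A + C)⁻¹ * Λt * ((n : ℝ) • A + C)) * P x := by
  intro P
  have hPdef : P = fun x => ((n : ℝ) • A + C)⁻¹ * opU Ψ x := rfl
  set K : Mat2 := (n : ℝ) • A + C with hKdef
  have hKdet : IsUnit K.det := (Matrix.isUnit_iff_isUnit_det K).mp hinv
  have hK1 : K * K⁻¹ = 1 := Matrix.mul_nonsing_inv K hKdet
  have hK2 : K⁻¹ * K = 1 := Matrix.nonsing_inv_mul K hKdet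
  obtain ⟨Ac, hAn, hΨx⟩ := hΨ
  -- truncated coefficients
  set A' : ℕ → Mat2 := fun k => if k ≤ n then Ac k else 0 with hA'def
  have hΨ' : Ψ = fun x => ∑ k ∈ Finset.range (n + 1), x ^ k • A' k := by
    funext x
    rw [hΨx x]
    refine Finset.sum_congr rfl fun k hk => ?_
    have : k ≤ n := Nat.lt_succ_iff.mp (Finset.mem_range.mp hk)
    simp [hA'def, this]
  have hA'n : A' n = 1 := by simp [hA'def, hAn]
  have hA'n1 : A' (n + 1) = 0 := by simp [hA'def]
  have hDΨ : ∀ x, mDeriv Ψ x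
      = ∑ k ∈ Finset.range (n + 1), ((k : ℝ) * x ^ (k - 1)) • A' k := by
    intro x; rw [hΨ']; exact mDeriv_sum A' (n + 1) x
  -- coefficients of opU Ψ
  set Coef : ℕ → Mat2 := fun k =>
    ((k : ℝ)) • (A' k * A) + (((k + 1 : ℕ) : ℝ)) • (A' (k + 1) * B) + A' k * C
    with hCoefdef
  have hCoefn : Coef n = K := by
    simp [hCoefdef, hA'n, hA'n1, hKdef]
  have hUΨ : ∀ x, opU Ψ x = ∑ k ∈ Finset.range (n + 1), x ^ k • Coef k := by
    intro x
    rw [hopU, hDΨ x, hS]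
    conv_lhs => rw [hΨ']
    have e1 : (∑ k ∈ Finset.range (n + 1), ((k : ℝ) * x ^ (k - 1)) • A' k) * (x • A + B)
        = (∑ k ∈ Finset.range (n + 1), x ^ k • (((k : ℝ)) • (A' k * A)))
          + ∑ k ∈ Finset.range (n + 1), ((k : ℝ) * x ^ (k - 1)) • (A' k * B) := by
      rw [Finset.sum_mul, ← Finset.sum_add_distrib]
      refine Finset.sum_congr rfl fun k _ => ?_
      rw [mul_add, smul_mul_assoc, smul_mul_assoc, mul_smul_comm, smul_smul, smul_smul]
      congr 1
      cases k with
      | zero => simp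
      | succ m => rw [Nat.add_sub_cancel, pow_succ]; ring
    have e2 : (∑ k ∈ Finset.range (n + 1), ((k : ℝ) * x ^ (k - 1)) • (A' k * B))
        = ∑ k ∈ Finset.range (n + 1), x ^ k • ((((k + 1 : ℕ) : ℝ)) • (A' (k + 1) * B)) := by
      rw [Finset.sum_range_succ' (fun k => ((k : ℝ) * x ^ (k - 1)) • (A' k * B)) n,
          Finset.sum_range_succ]
      simp only [hA'n1, zero_mul, smul_zero, add_zero, Nat.cast_zero, mul_zero]
      simp only [Nat.cast_ofNat, Nat.add_sub_cancel, Nat.cast_add, Nat.cast_one, zero_mul,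
        zero_smul, add_zero]
      refine Finset.sum_congr rfl fun k _ => ?_
      rw [smul_smul, mul_comm]
    have e3 : (∑ k ∈ Finset.range (n + 1), x ^ k • A' k) * C
        = ∑ k ∈ Finset.range (n + 1), x ^ k • (A' k * C) := by
      rw [Finset.sum_mul]
      exact Finset.sum_congr rfl fun k _ => smul_mul_assoc _ _ _
    rw [e1, e2, e3, ← Finset.sum_add_distrib, ← Finset.sum_add_distrib]
    refine Finset.sum_congr rfl fun k _ => ?_
    rw [hCoefdef]
    simp only [smul_add]
  -- Part 1: P is monic of degree n
  have hPform : ∀ x, P x = ∑ k ∈ Finset.range (n + 1), x ^ k • (K⁻¹ * Coef k) := by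
    intro x
    rw [hPdef]
    simp only
    rw [hUΨ x, Finset.mul_sum]
    exact Finset.sum_congr rfl fun k _ => (mul_smul_comm _ _ _)
  have hmonic : IsMonicMatPoly P n :=
    ⟨fun k => K⁻¹ * Coef k, by show K⁻¹ * Coef n = 1; rw [hCoefn, hK2], hPform⟩
  -- differentiability of entries
  have hΨdiff : ∀ (i j : Fin 2) x, DifferentiableAt ℝ (fun t => Ψ t i j) x := by
    intro i j x
    rw [hΨ']
    exact polyEntryDiff A' (n + 1) i j x
  have hUΨfun : opU Ψ = fun x => ∑ k ∈ Finset.range (n + 1), x ^ k • Coef k :=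
    funext hUΨ
  have hUΨdiff : ∀ (i j : Fin 2) x, DifferentiableAt ℝ (fun t => opU Ψ t i j) x := by
    intro i j x
    rw [hUΨfun]
    exact polyEntryDiff Coef (n + 1) i j x
  refine ⟨hmonic, ?_⟩
  -- opV P = (K⁻¹ * Λt) * Ψ
  have hVP : opV P = fun x => (K⁻¹ * Λt) * Ψ x := by
    funext x
    rw [hopV]
    have hdP : mDeriv P x = K⁻¹ * mDeriv (opU Ψ) x := by
      rw [hPdef]
      exact mDeriv_const_mul K⁻¹ (opU Ψ) x (fun i j => hUΨdiff i j x)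
    rw [hdP, hPdef]
    simp only
    rw [Matrix.mul_assoc, Matrix.mul_assoc, ← Matrix.mul_add, ← hopV, heig, Matrix.mul_assoc]
  intro x
  rw [hopU, hVP]
  have hdVP : mDeriv (fun x => (K⁻¹ * Λt) * Ψ x) x = (K⁻¹ * Λt) * mDeriv Ψ x :=
    mDeriv_const_mul (K⁻¹ * Λt) Ψ x (fun i j => hΨdiff i j x)
  rw [hdVP, hPdef]
  simp only
  rw [hopU Ψ x, ← Matrix.mul_assoc, Matrix.mul_assoc (K⁻¹ * Λt) K K⁻¹, hK1, Matrix.mul_one]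
  simp only [Matrix.mul_add, Matrix.mul_assoc]

end
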